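/- On [0,1) with Lebesgue measure, for f = 1_{[0,1/2)} and any c ∈ {0,1}, the oscillation at level 1/2 satisfies (1_{[0,1)}(f − c))*(|[0,1)|/2) = 0, hence ω_{1/2}(f;[0,1)) = 0; yet for any median m ∈ (0,1) of f on [0,1), (1_{[0,1)}(f − m))*(|[0,1)|/2) > 0. Thus the bound (1_Q(f−m_f(Q)))*(ν|Q|) ≤ 2ω_ν(f;Q) fails at ν = 1/2. -/

import Mathlib

open MeasureTheory ENNReal

/-- Decreasing rearrangement `g*(t) = inf {α ≥ 0 : |{|g| > α}| ≤ t}`, in `ℝ≥0∞`. -/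
noncomputable def rearr (g : ℝ → ℝ) (t : ℝ≥0∞) : ℝ≥0∞ :=
  sInf {α : ℝ≥0∞ | volume {x | α < ENNReal.ofReal |g x|} ≤ t}

/-- `m` is a median of `f` on `Q` (Lebesgue measure on `ℝ`). -/
def IsMedian (f : ℝ → ℝ) (Q : Set ℝ) (m : ℝ) : Prop :=
  volume (Q ∩ {x | m < f x}) ≤ volume Q / 2 ∧
    volume (Q ∩ {x | f x < m}) ≤ volume Q / 2

/-- The local oscillation `ω_ν(f;Q) = inf_c (1_Q(f−c))*(ν|Q|)`. -/
noncomputable def osc (ν : ℝ) (f : ℝ → ℝ) (Q : Set ℝ) : ℝ≥0∞ :=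
  ⨅ c : ℝ, rearr (Q.indicator fun x => f x - c) (ENNReal.ofReal ν * volume Q)

/-- for `f = 1_{[0,1/2)}` and `Q = [0,1)`: for `c ∈ {0,1}` the rearranged
oscillation at level `1/2` vanishes, so `ω_{1/2}(f;Q) = 0`; yet for any median
`m ∈ (0,1)` of `f` on `Q`, `(1_Q(f−m))*(|Q|/2) > 0`, so the bound
`(1_Q(f−m))*(ν|Q|) ≤ 2 ω_ν(f;Q)` fails at `ν = 1/2`. -/
theorem stmt19 :
    let f : ℝ → ℝ := (Set.Ico (0 : ℝ) (1 / 2)).indicator fun _ => 1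
    let Q : Set ℝ := Set.Ico (0 : ℝ) 1
    (∀ c ∈ ({0, 1} : Set ℝ),
        rearr (Q.indicator fun x => f x - c) (volume Q / 2) = 0) ∧
      osc (1 / 2) f Q = 0 ∧
      (∀ m ∈ Set.Ioo (0 : ℝ) 1, IsMedian f Q m →
        0 < rearr (Q.indicator fun x => f x - m) (volume Q / 2)) ∧
      ∀ m ∈ Set.Ioo (0 : ℝ) 1, IsMedian f Q m →
        ¬ rearr (Q.indicator fun x => f x - m) (volume Q / 2) ≤
            2 * osc (1 / 2) f Q := by
  intro f Q
  have hQ : volume Q = 1 := by simp [Q, Real.volume_Ico]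
  have hQ2 : volume Q / 2 = 1 / 2 := by rw [hQ]
  have hhalf : ENNReal.ofReal (1 / 2 : ℝ) = (1 / 2 : ℝ≥0∞) := by
    rw [ENNReal.ofReal_div_of_pos (by norm_num)]; norm_num
  -- rearr vanishes for c = 0 and c = 1 at level 1/2
  have hr0 : ∀ c ∈ ({0, 1} : Set ℝ),
      rearr (Q.indicator fun x => f x - c) (1 / 2 : ℝ≥0∞) = 0 := by
    intro c hc
    refine le_antisymm (sInf_le ?_) zero_le
    rcases hc with rfl | rfl
    · -- c = 0: support is [0, 1/2)
      have hsub : {x : ℝ | (0 : ℝ≥0∞) < ENNReal.ofReal |Q.indicator (fun x => f x - 0) x|}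
          ⊆ Set.Ico (0 : ℝ) (1 / 2) := by
        intro x hx
        simp only [Set.mem_setOf_eq] at hx
        by_contra hxn
        have : Q.indicator (fun x => f x - 0) x = 0 := by
          by_cases hxQ : x ∈ Q
          · rw [Set.indicator_of_mem hxQ]
            have hf : f x = 0 := Set.indicator_of_notMem hxn _
            rw [hf]; ring
          · exact Set.indicator_of_notMem hxQ _
        rw [this] at hx
        simp at hx
      have : volume {x : ℝ | (0 : ℝ≥0∞) < ENNReal.ofReal |Q.indicator (fun x => f x - 0) x|}
          ≤ 1 / 2 := by
        refine le_trans (measure_mono hsub) ?_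
        rw [Real.volume_Ico, show (1 / 2 - 0 : ℝ) = 1 / 2 by norm_num, hhalf]
      exact this
    · -- c = 1: support is [1/2, 1)
      have hsub : {x : ℝ | (0 : ℝ≥0∞) < ENNReal.ofReal |Q.indicator (fun x => f x - 1) x|}
          ⊆ Set.Ico (1 / 2 : ℝ) 1 := by
        intro x hx
        simp only [Set.mem_setOf_eq] at hx
        by_contra hxn
        have : Q.indicator (fun x => f x - 1) x = 0 := by
          by_cases hxQ : x ∈ Q
          · rw [Set.indicator_of_mem hxQ]
            have hx05 : x ∈ Set.Ico (0 : ℝ) (1 / 2) := by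
              rcases hxQ with ⟨h0, h1⟩
              constructor
              · exact h0
              · by_contra h
                exact hxn ⟨not_lt.mp h, h1⟩
            have hf : f x = 1 := Set.indicator_of_mem hx05 _
            rw [hf]; ring
          · exact Set.indicator_of_notMem hxQ _
        rw [this] at hx
        simp at hx
      have : volume {x : ℝ | (0 : ℝ≥0∞) < ENNReal.ofReal |Q.indicator (fun x => f x - 1) x|}
          ≤ 1 / 2 := by
        refine le_trans (measure_mono hsub) ?_
        rw [Real.volume_Ico, show (1 : ℝ) - 1 / 2 = 1 / 2 by norm_num, hhalf]
      exact this
  have hlevel : ENNReal.ofReal (1 / 2 : ℝ) * volume Q = 1 / 2 := by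
    rw [hQ, mul_one, ENNReal.ofReal_div_of_pos (by norm_num)]
    norm_num
  have hosc : osc (1 / 2) f Q = 0 := by
    refine le_antisymm ?_ zero_le
    refine le_trans (iInf_le _ (0 : ℝ)) ?_
    rw [hlevel, hr0 0 (by simp)]
  have hpos : ∀ m ∈ Set.Ioo (0 : ℝ) 1, IsMedian f Q m →
      0 < rearr (Q.indicator fun x => f x - m) (volume Q / 2) := by
    intro m hm _
    rcases hm with ⟨hm0, hm1⟩
    have hminpos : 0 < min m (1 - m) := lt_min hm0 (by linarith)
    have hge : ENNReal.ofReal (min m (1 - m)) ≤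
        rearr (Q.indicator fun x => f x - m) (volume Q / 2) := by
      refine le_sInf ?_
      intro α hα
      by_contra hlt
      push_neg at hlt
      have hsub : Q ⊆ {x : ℝ | α < ENNReal.ofReal |Q.indicator (fun x => f x - m) x|} := by
        intro x hxQ
        have hval : min m (1 - m) ≤ |Q.indicator (fun x => f x - m) x| := by
          rw [Set.indicator_of_mem hxQ]
          by_cases hx : x ∈ Set.Ico (0 : ℝ) (1 / 2)
          · have : f x = 1 := Set.indicator_of_mem hx _
            rw [this, abs_of_pos (by linarith)]
            exact min_le_right _ _
          · have : f x = 0 := Set.indicator_of_notMem hx _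
            rw [this, abs_of_neg (by linarith)]
            simpa using min_le_left m (1 - m)
        exact lt_of_lt_of_le hlt (ENNReal.ofReal_le_ofReal hval)
      have h1 : (1 : ℝ≥0∞) ≤
          volume {x : ℝ | α < ENNReal.ofReal |Q.indicator (fun x => f x - m) x|} := by
        calc (1 : ℝ≥0∞) = volume Q := hQ.symm
          _ ≤ _ := measure_mono hsub
      rw [Set.mem_setOf_eq, hQ2] at hα
      have : (1 : ℝ≥0∞) ≤ 1 / 2 := le_trans h1 hα
      norm_num at this
    exact lt_of_lt_of_le (ENNReal.ofReal_pos.mpr hminpos) hge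
  refine ⟨?_, hosc, hpos, ?_⟩
  · intro c hc
    rw [hQ2]
    exact hr0 c hc
  · intro m hm hmed h
    rw [hosc, mul_zero, le_zero_iff] at h
    exact absurd h (ne_of_gt (hpos m hm hmed))
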